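/- arXiv:1601.05106 — 3 statements merged into one kernel-verified Lean document; each statement's English description precedes it below -/
import Mathlib

section
/- Reflexivity of declarative subtyping: if type A is well-formed under declarative context Ψ, then A is a subtype of itself under Ψ at either polarity (A ≤± A). -/
/-- Sorts κ ∈ {⋆, ℕ}. -/
inductive Srt : Type
  | star
  | nat
  deriving DecidableEq

/-- Declarative contexts Ψ: lists of universal-variable declarations `α : κ`.
The head of the list is the rightmost (most recent) declaration, so `Ψ, α:κ`
is `(α, κ) :: Ψ` and `Ψ₀, Ψ₁` is `Ψ₁ ++ Ψ₀`. -/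
abbrev DCtx := List (ℕ × Srt)

/-- Types and index terms, with named variables:
`1 | α | zero | succ t | A → B | A + B | A × B | ∀α:κ. A | ∃α:κ. A | (t = u) ⊃ A | A ∧ (t = u)`. -/
inductive Ty : Type
  | unit
  | var (x : ℕ)
  | zero
  | succ (t : Ty)
  | arrow (A B : Ty)
  | sum (A B : Ty)
  | prod (A B : Ty)
  | all (x : ℕ) (κ : Srt) (A : Ty)
  | ex (x : ℕ) (κ : Srt) (A : Ty)
  | impl (t u : Ty) (A : Ty)
  | wth (A : Ty) (t u : Ty)
  deriving DecidableEq

namespace Ty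

/-- Substitution `[τ/α]` of a monotype for a universal variable
(stopping at shadowing binders). -/
def subst (τ : Ty) (α : ℕ) : Ty → Ty
  | unit => unit
  | var x => if x = α then τ else var x
  | zero => zero
  | succ t => succ (subst τ α t)
  | arrow A B => arrow (subst τ α A) (subst τ α B)
  | sum A B => sum (subst τ α A) (subst τ α B)
  | prod A B => prod (subst τ α A) (subst τ α B)
  | all x κ A => all x κ (if x = α then A else subst τ α A)
  | ex x κ A => ex x κ (if x = α then A else subst τ α A)
  | impl t u A => impl (subst τ α t) (subst τ α u) (subst τ α A)
  | wth A t u => wth (subst τ α A) (subst τ α t) (subst τ α u)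

/-- Head-negative: headed by a universal quantifier `∀`. -/
def headAll : Ty → Prop
  | all _ _ _ => True
  | _ => False

/-- Head-positive: headed by an existential quantifier `∃`. -/
def headEx : Ty → Prop
  | ex _ _ _ => True
  | _ => False

end Ty

/-- Sorting judgment `Ψ ⊢ t : κ` (defined only on monotypes/index terms). -/
inductive Sorting : DCtx → Ty → Srt → Prop
  | var {Ψ x κ} : (x, κ) ∈ Ψ → Sorting Ψ (Ty.var x) κ
  | unit {Ψ} : Sorting Ψ Ty.unit Srt.star
  | zero {Ψ} : Sorting Ψ Ty.zero Srt.nat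
  | succ {Ψ t} : Sorting Ψ t Srt.nat → Sorting Ψ (Ty.succ t) Srt.nat
  | arrow {Ψ A B} : Sorting Ψ A Srt.star → Sorting Ψ B Srt.star →
      Sorting Ψ (Ty.arrow A B) Srt.star
  | sum {Ψ A B} : Sorting Ψ A Srt.star → Sorting Ψ B Srt.star →
      Sorting Ψ (Ty.sum A B) Srt.star
  | prod {Ψ A B} : Sorting Ψ A Srt.star → Sorting Ψ B Srt.star →
      Sorting Ψ (Ty.prod A B) Srt.star

/-- Proposition well-formedness `Ψ ⊢ t = u prop`: both sides have sort ℕ. -/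
inductive PropWF : DCtx → Ty → Ty → Prop
  | eq {Ψ t u} : Sorting Ψ t Srt.nat → Sorting Ψ u Srt.nat → PropWF Ψ t u

/-- Type well-formedness `Ψ ⊢ A type`. -/
inductive TyWF : DCtx → Ty → Prop
  | var {Ψ x} : (x, Srt.star) ∈ Ψ → TyWF Ψ (Ty.var x)
  | unit {Ψ} : TyWF Ψ Ty.unit
  | arrow {Ψ A B} : TyWF Ψ A → TyWF Ψ B → TyWF Ψ (Ty.arrow A B)
  | sum {Ψ A B} : TyWF Ψ A → TyWF Ψ B → TyWF Ψ (Ty.sum A B)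
  | prod {Ψ A B} : TyWF Ψ A → TyWF Ψ B → TyWF Ψ (Ty.prod A B)
  | all {Ψ x κ A} : TyWF ((x, κ) :: Ψ) A → TyWF Ψ (Ty.all x κ A)
  | ex {Ψ x κ A} : TyWF ((x, κ) :: Ψ) A → TyWF Ψ (Ty.ex x κ A)
  | impl {Ψ t u A} : PropWF Ψ t u → TyWF Ψ A → TyWF Ψ (Ty.impl t u A)
  | wth {Ψ A t u} : TyWF Ψ A → PropWF Ψ t u → TyWF Ψ (Ty.wth A t u)

/-- Polarities ±. -/
inductive Pol : Type
  | pos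
  | neg
  deriving DecidableEq

/-- Declarative subtyping `Ψ ⊢ A ≤± B`. -/
inductive DSub : DCtx → Pol → Ty → Ty → Prop
  | refl {Ψ p A} : ¬ Ty.headAll A → ¬ Ty.headEx A → DSub Ψ p A A
  | allL {Ψ τ κ α A B} : Sorting Ψ τ κ →
      DSub Ψ Pol.neg (Ty.subst τ α A) B → DSub Ψ Pol.neg (Ty.all α κ A) B
  | allR {Ψ β κ A B} : DSub ((β, κ) :: Ψ) Pol.neg A B →
      DSub Ψ Pol.neg A (Ty.all β κ B)
  | exL {Ψ α κ A B} : DSub ((α, κ) :: Ψ) Pol.pos A B →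
      DSub Ψ Pol.pos (Ty.ex α κ A) B
  | exR {Ψ τ κ β A B} : Sorting Ψ τ κ →
      DSub Ψ Pol.pos A (Ty.subst τ β B) → DSub Ψ Pol.pos A (Ty.ex β κ B)
  | posNeg {Ψ A B} : DSub Ψ Pol.neg A B → ¬ Ty.headEx A → ¬ Ty.headEx B →
      DSub Ψ Pol.pos A B
  | negPos {Ψ A B} : DSub Ψ Pol.pos A B → ¬ Ty.headAll A → ¬ Ty.headAll B →
      DSub Ψ Pol.neg A B

lemma subst_var_self (α : ℕ) : ∀ A : Ty, Ty.subst (Ty.var α) α A = A := by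
  intro A
  induction A with
  | unit => rfl
  | var x => simp [Ty.subst]; intro h; simp [h]
  | zero => rfl
  | succ t ih => simp [Ty.subst, ih]
  | arrow A B ihA ihB => simp [Ty.subst, ihA, ihB]
  | sum A B ihA ihB => simp [Ty.subst, ihA, ihB]
  | prod A B ihA ihB => simp [Ty.subst, ihA, ihB]
  | all x κ A ih => simp [Ty.subst]; intro _; exact ih
  | ex x κ A ih => simp [Ty.subst]; intro _; exact ih
  | impl t u A iht ihu ihA => simp [Ty.subst, iht, ihu, ihA]
  | wth A t u ihA iht ihu => simp [Ty.subst, iht, ihu, ihA]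

/-- **Reflexivity of declarative subtyping**: if `Ψ ⊢ A type` then
`Ψ ⊢ A ≤± A` at either polarity. -/
theorem decl_sub_refl (Ψ : DCtx) (A : Ty) (p : Pol) (h : TyWF Ψ A) :
    DSub Ψ p A A := by
  induction h generalizing p with
  | var hmem => exact DSub.refl (by simp [Ty.headAll]) (by simp [Ty.headEx])
  | unit => exact DSub.refl (by simp [Ty.headAll]) (by simp [Ty.headEx])
  | arrow _ _ _ _ => exact DSub.refl (by simp [Ty.headAll]) (by simp [Ty.headEx])
  | sum _ _ _ _ => exact DSub.refl (by simp [Ty.headAll]) (by simp [Ty.headEx])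
  | prod _ _ _ _ => exact DSub.refl (by simp [Ty.headAll]) (by simp [Ty.headEx])
  | impl _ _ _ => exact DSub.refl (by simp [Ty.headAll]) (by simp [Ty.headEx])
  | wth _ _ _ => exact DSub.refl (by simp [Ty.headAll]) (by simp [Ty.headEx])
  | @all Ψ' x κ A _ ih =>
      have hneg : DSub Ψ' Pol.neg (Ty.all x κ A) (Ty.all x κ A) := by
        apply DSub.allR
        apply DSub.allL (τ := Ty.var x) (Sorting.var List.mem_cons_self)
        rw [subst_var_self]
        exact ih Pol.neg
      cases p with
      | neg => exact hneg
      | pos => exact DSub.posNeg hneg (by simp [Ty.headEx]) (by simp [Ty.headEx])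
  | @ex Ψ' x κ A _ ih =>
      have hpos : DSub Ψ' Pol.pos (Ty.ex x κ A) (Ty.ex x κ A) := by
        apply DSub.exL
        apply DSub.exR (τ := Ty.var x) (Sorting.var List.mem_cons_self)
        rw [subst_var_self]
        exact ih Pol.pos
      cases p with
      | pos => exact hpos
      | neg => exact DSub.negPos hpos (by simp [Ty.headAll]) (by simp [Ty.headAll])
end

section
/- Subtyping inversion: (1) if Ψ ⊢ (∃α:κ. A) ≤⁺ B then Ψ, α:κ ⊢ A ≤⁺ B; (2) if Ψ ⊢ A ≤⁻ (∀β:κ. B) then Ψ, β:κ ⊢ A ≤⁻ B. -/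
theorem Sorting.weaken {Ψ Ψ' : DCtx} {t κ} (h : Sorting Ψ t κ)
    (hsub : ∀ x ∈ Ψ, x ∈ Ψ') : Sorting Ψ' t κ := by
  induction h with
  | var hx => exact Sorting.var (hsub _ hx)
  | unit => exact Sorting.unit
  | zero => exact Sorting.zero
  | succ _ ih => exact Sorting.succ ih
  | arrow _ _ ih1 ih2 => exact Sorting.arrow ih1 ih2
  | sum _ _ ih1 ih2 => exact Sorting.sum ih1 ih2
  | prod _ _ ih1 ih2 => exact Sorting.prod ih1 ih2

theorem dsub_inv_aux {Ψ p A B} (h : DSub Ψ p A B) :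
    (∀ α κ A', p = Pol.pos → A = Ty.ex α κ A' → DSub ((α, κ) :: Ψ) Pol.pos A' B) ∧
    (∀ β κ B', p = Pol.neg → B = Ty.all β κ B' → DSub ((β, κ) :: Ψ) Pol.neg A B') := by
  induction h with
  | @refl Ψ p A hAll hEx =>
    constructor
    · rintro α κ A' _ rfl; exact absurd trivial hEx
    · rintro β κ B' _ rfl; exact absurd trivial hAll
  | @allL Ψ τ κ α A B hs _ ih =>
    refine ⟨by rintro _ _ _ ⟨⟩, ?_⟩
    rintro β κ' B' _ rfl
    exact DSub.allL (hs.weaken (fun x hx => List.mem_cons_of_mem _ hx))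
      (ih.2 β κ' B' rfl rfl)
  | @allR Ψ β κ A B _ _ =>
    refine ⟨by rintro _ _ _ ⟨⟩, ?_⟩
    rintro β' κ' B' _ h'
    cases h'
    assumption
  | @exL Ψ α κ A B h _ =>
    refine ⟨?_, by rintro _ _ _ ⟨⟩⟩
    rintro α' κ' A' _ h'
    cases h'
    exact h
  | @exR Ψ τ κ β A B hs _ ih =>
    refine ⟨?_, by rintro _ _ _ ⟨⟩⟩
    rintro α κ' A' _ rfl
    exact DSub.exR (hs.weaken (fun x hx => List.mem_cons_of_mem _ hx))
      (ih.1 α κ' A' rfl rfl)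
  | @posNeg Ψ A B _ hA hB _ =>
    refine ⟨?_, by rintro _ _ _ ⟨⟩⟩
    rintro α κ A' _ rfl; exact absurd trivial hA
  | @negPos Ψ A B _ hA hB _ =>
    refine ⟨by rintro _ _ _ ⟨⟩, ?_⟩
    rintro β κ B' _ rfl; exact absurd trivial hB

/-- **Subtyping inversion**:
(1) if `Ψ ⊢ (∃α:κ. A) ≤⁺ B` then `Ψ, α:κ ⊢ A ≤⁺ B`;
(2) if `Ψ ⊢ A ≤⁻ (∀β:κ. B)` then `Ψ, β:κ ⊢ A ≤⁻ B`. -/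
theorem decl_subtyping_inversion :
    (∀ (Ψ : DCtx) (α : ℕ) (κ : Srt) (A B : Ty),
      DSub Ψ Pol.pos (Ty.ex α κ A) B → DSub ((α, κ) :: Ψ) Pol.pos A B) ∧
    (∀ (Ψ : DCtx) (β : ℕ) (κ : Srt) (A B : Ty),
      DSub Ψ Pol.neg A (Ty.all β κ B) → DSub ((β, κ) :: Ψ) Pol.neg A B) :=
  ⟨fun _ α κ A _ h => (dsub_inv_aux h).1 α κ A rfl rfl,
   fun _ β κ _ B h => (dsub_inv_aux h).2 β κ B rfl rfl⟩
end

section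
/- Subtyping polarity flip: (1) if A and B are both not head-positive (not headed by ∃) and Ψ ⊢ A ≤⁺ B, then Ψ ⊢ A ≤⁻ B with a derivation of the same or smaller size; (2) symmetrically for not head-negative (not headed by ∀) and ≤⁻ implies ≤⁺; (3) if A and B are neither head-positive nor head-negative and Ψ ⊢ A ≤± B then A = B. -/
/-- Declarative subtyping `Ψ ⊢ A ≤± B`, indexed by the size of the derivation. -/
inductive SubN : ℕ → DCtx → Pol → Ty → Ty → Prop
  | refl {Ψ p A} : ¬ Ty.headAll A → ¬ Ty.headEx A → SubN 1 Ψ p A A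
  | allL {n Ψ τ κ α A B} : Sorting Ψ τ κ →
      SubN n Ψ Pol.neg (Ty.subst τ α A) B → SubN (n + 1) Ψ Pol.neg (Ty.all α κ A) B
  | allR {n Ψ β κ A B} : SubN n ((β, κ) :: Ψ) Pol.neg A B →
      SubN (n + 1) Ψ Pol.neg A (Ty.all β κ B)
  | exL {n Ψ α κ A B} : SubN n ((α, κ) :: Ψ) Pol.pos A B →
      SubN (n + 1) Ψ Pol.pos (Ty.ex α κ A) B
  | exR {n Ψ τ κ β A B} : Sorting Ψ τ κ →
      SubN n Ψ Pol.pos A (Ty.subst τ β B) → SubN (n + 1) Ψ Pol.pos A (Ty.ex β κ B)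
  | posNeg {n Ψ A B} : SubN n Ψ Pol.neg A B → ¬ Ty.headEx A → ¬ Ty.headEx B →
      SubN (n + 1) Ψ Pol.pos A B
  | negPos {n Ψ A B} : SubN n Ψ Pol.pos A B → ¬ Ty.headAll A → ¬ Ty.headAll B →
      SubN (n + 1) Ψ Pol.neg A B

/-- **Subtyping polarity flip**:
(1) if `A`, `B` are not head-positive and `Ψ ⊢ A ≤⁺ B` then `Ψ ⊢ A ≤⁻ B`
with a derivation of the same or smaller size;
(2) symmetrically for not head-negative, `≤⁻` implies `≤⁺`;
(3) if `A`, `B` are neither head-positive nor head-negative and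
`Ψ ⊢ A ≤± B` then `A = B`. -/
theorem decl_polarity_flip :
    (∀ (n : ℕ) (Ψ : DCtx) (A B : Ty), ¬ Ty.headEx A → ¬ Ty.headEx B →
      SubN n Ψ Pol.pos A B → ∃ m ≤ n, SubN m Ψ Pol.neg A B) ∧
    (∀ (n : ℕ) (Ψ : DCtx) (A B : Ty), ¬ Ty.headAll A → ¬ Ty.headAll B →
      SubN n Ψ Pol.neg A B → ∃ m ≤ n, SubN m Ψ Pol.pos A B) ∧
    (∀ (n : ℕ) (Ψ : DCtx) (p : Pol) (A B : Ty),
      ¬ Ty.headEx A → ¬ Ty.headAll A → ¬ Ty.headEx B → ¬ Ty.headAll B →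
      SubN n Ψ p A B → A = B) := by
  refine ⟨?_, ?_, ?_⟩
  · intro n Ψ A B hA hB h
    cases h with
    | refl h1 h2 => exact ⟨1, le_refl 1, SubN.refl h1 h2⟩
    | exL _ => exact absurd trivial hA
    | exR _ _ => exact absurd trivial hB
    | posNeg h _ _ => exact ⟨_, Nat.le_succ _, h⟩
  · intro n Ψ A B hA hB h
    cases h with
    | refl h1 h2 => exact ⟨1, le_refl 1, SubN.refl h1 h2⟩
    | allL _ _ => exact absurd trivial hA
    | allR _ => exact absurd trivial hB
    | negPos h _ _ => exact ⟨_, Nat.le_succ _, h⟩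
  · intro n Ψ p A B hA hA' hB hB' h
    revert hA hA' hB hB'
    induction h with
    | refl _ _ => intros; rfl
    | allL _ _ ih => intro _ hA' _ _; exact absurd trivial hA'
    | allR _ ih => intro _ _ _ hB'; exact absurd trivial hB'
    | exL _ ih => intro hA _ _ _; exact absurd trivial hA
    | exR _ _ ih => intro _ _ hB _; exact absurd trivial hB
    | posNeg _ _ _ ih => exact ih
    | negPos _ _ _ ih => exact ih
end
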